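/- Let $\Lambda$ be a nonempty finite set and for each $\lambda \in \Lambda$ let $A_n(\lambda), a_n(\lambda), B_n(\lambda)$ be real sequences with $B_n(\lambda) \geq \kappa > 0$ for all $n \geq N$ and all $\lambda$. Suppose $\sup_{\lambda} |a_n(\lambda)/B_n(\lambda)| \to 0$ and $\sup_{\lambda} |(A_n(\lambda)-B_n(\lambda))/B_n(\lambda)| \to 0$ as $n \to \infty$. If $\hat{\lambda}_n \in \operatorname{argmin}_{\lambda \in \Lambda} (A_n(\lambda) + a_n(\lambda))$, then $A_n(\hat{\lambda}_n) / \inf_{\lambda \in \Lambda} A_n(\lambda) \to 1$. -/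

import Mathlib

open Filter

theorem stmt_0 {Λ : Type*} [Finite Λ] [Nonempty Λ]
    (A a B : ℕ → Λ → ℝ) (κ : ℝ) (hκ : 0 < κ) (N : ℕ)
    (hB : ∀ n ≥ N, ∀ l : Λ, κ ≤ B n l)
    (ha : Tendsto (fun n => ⨆ l : Λ, |a n l / B n l|) atTop (nhds 0))
    (hAB : Tendsto (fun n => ⨆ l : Λ, |(A n l - B n l) / B n l|) atTop (nhds 0))
    (lhat : ℕ → Λ)
    (hmin : ∀ n, ∀ l : Λ, A n (lhat n) + a n (lhat n) ≤ A n l + a n l) :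
    Tendsto (fun n => A n (lhat n) / ⨅ l : Λ, A n l) atTop (nhds 1) := by
  set ε := fun n => ⨆ l : Λ, |a n l / B n l| with hεdef
  set δ := fun n => ⨆ l : Λ, |(A n l - B n l) / B n l| with hδdef
  have hbdd : ∀ (f : Λ → ℝ), BddAbove (Set.range f) :=
    fun f => Set.Finite.bddAbove (Set.finite_range f)
  have hbddb : ∀ (f : Λ → ℝ), BddBelow (Set.range f) :=
    fun f => Set.Finite.bddBelow (Set.finite_range f)
  have hεnn : ∀ n, 0 ≤ ε n := fun n =>
    le_trans (abs_nonneg _)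
      (le_ciSup (hbdd fun l => |a n l / B n l|) (Classical.arbitrary Λ))
  have hδnn : ∀ n, 0 ≤ δ n := fun n =>
    le_trans (abs_nonneg _)
      (le_ciSup (hbdd fun l => |(A n l - B n l) / B n l|) (Classical.arbitrary Λ))
  set C := fun n => (1 + δ n) * (1 + (δ n + ε n)) / ((1 - (δ n + ε n)) * (1 - δ n)) with hCdef
  have hC : Tendsto C atTop (nhds 1) := by
    have hδε : Tendsto (fun n => δ n + ε n) atTop (nhds 0) := by
      simpa using hAB.add ha
    have h1 : Tendsto (fun n => (1 + δ n) * (1 + (δ n + ε n))) atTop (nhds ((1+0)*(1+0))) :=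
      (tendsto_const_nhds.add hAB).mul (tendsto_const_nhds.add hδε)
    have h2 : Tendsto (fun n => (1 - (δ n + ε n)) * (1 - δ n)) atTop (nhds ((1-0)*(1-0))) :=
      (tendsto_const_nhds.sub hδε).mul (tendsto_const_nhds.sub hAB)
    have := h1.div h2 (by norm_num)
    have e : ((1:ℝ)+0)*(1+0)/((1-0)*(1-0)) = 1 := by norm_num
    rw [e] at this
    exact this
  apply tendsto_of_tendsto_of_tendsto_of_le_of_le' (tendsto_const_nhds : Tendsto (fun _ : ℕ => (1:ℝ)) atTop (nhds 1)) hC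
  · -- 1 ≤ ratio eventually
    have h1 := ha.eventually (gt_mem_nhds (show (0:ℝ) < 1/4 by norm_num))
    have h2 := hAB.eventually (gt_mem_nhds (show (0:ℝ) < 1/4 by norm_num))
    filter_upwards [h1, h2, eventually_ge_atTop N] with n hεn hδn hn
    have hBpos : ∀ l, 0 < B n l := fun l => lt_of_lt_of_le hκ (hB n hn l)
    have hAabs : ∀ l, |A n l - B n l| ≤ δ n * B n l := by
      intro l
      have h := le_ciSup (hbdd (fun l => |(A n l - B n l) / B n l|)) l
      rw [abs_div, abs_of_pos (hBpos l), div_le_iff₀ (hBpos l)] at h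
      linarith [h]
    have hApos : ∀ l, κ/2 ≤ A n l := by
      intro l
      have h := hAabs l
      have h' := abs_le.1 h
      have hb := hB n hn l
      nlinarith [hBpos l, hδn.le, hδnn n]
    have hm : κ/2 ≤ ⨅ l, A n l := le_ciInf hApos
    have hmpos : 0 < ⨅ l, A n l := lt_of_lt_of_le (by linarith) hm
    exact (one_le_div hmpos).2 (ciInf_le (hbddb _) _)
  · -- ratio ≤ C eventually
    have h1 := ha.eventually (gt_mem_nhds (show (0:ℝ) < 1/4 by norm_num))
    have h2 := hAB.eventually (gt_mem_nhds (show (0:ℝ) < 1/4 by norm_num))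
    filter_upwards [h1, h2, eventually_ge_atTop N] with n hεn hδn hn
    have hBpos : ∀ l, 0 < B n l := fun l => lt_of_lt_of_le hκ (hB n hn l)
    have hεn0 := hεnn n
    have hδn0 := hδnn n
    have haabs : ∀ l, |a n l| ≤ ε n * B n l := by
      intro l
      have h := le_ciSup (hbdd (fun l => |a n l / B n l|)) l
      rw [abs_div, abs_of_pos (hBpos l), div_le_iff₀ (hBpos l)] at h
      linarith [h]
    have hAabs : ∀ l, |A n l - B n l| ≤ δ n * B n l := by
      intro l
      have h := le_ciSup (hbdd (fun l => |(A n l - B n l) / B n l|)) l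
      rw [abs_div, abs_of_pos (hBpos l), div_le_iff₀ (hBpos l)] at h
      linarith [h]
    have hAlow : ∀ l, (1 - δ n) * B n l ≤ A n l := by
      intro l; have := (abs_le.1 (hAabs l)).1; linarith
    have hAup : ∀ l, A n l ≤ (1 + δ n) * B n l := by
      intro l; have := (abs_le.1 (hAabs l)).2; linarith
    have hApos : ∀ l, κ/2 ≤ A n l := by
      intro l
      have := hAlow l
      have hb := hB n hn l
      nlinarith [hBpos l, hδn.le]
    have hm : κ/2 ≤ ⨅ l, A n l := le_ciInf hApos
    have hmpos : 0 < ⨅ l, A n l := lt_of_lt_of_le (by linarith) hm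
    set d := δ n
    set e := ε n
    have hDpos : (0:ℝ) < (1 - (d + e)) * (1 - d) := by nlinarith
    have hNupos : (0:ℝ) < (1 + d) * (1 + (d + e)) := by nlinarith
    have hCpos : 0 < C n := div_pos hNupos hDpos
    have key : ∀ l, A n (lhat n) * ((1 - (d + e)) * (1 - d)) ≤ ((1 + d) * (1 + (d + e))) * A n l := by
      intro l
      have step1 : (1 - (d + e)) * B n (lhat n) ≤ (1 + (d + e)) * B n l := by
        have hmin' := hmin n l
        have h4 := (abs_le.1 (haabs (lhat n))).1
        have h5 := (abs_le.1 (haabs l)).2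
        have h6 := hAlow (lhat n)
        have h7 := hAup l
        nlinarith
      calc A n (lhat n) * ((1 - (d + e)) * (1 - d))
          ≤ ((1 + d) * B n (lhat n)) * ((1 - (d + e)) * (1 - d)) :=
            mul_le_mul_of_nonneg_right (hAup (lhat n)) (le_of_lt hDpos)
        _ = ((1 + d) * (1 - d)) * ((1 - (d + e)) * B n (lhat n)) := by ring
        _ ≤ ((1 + d) * (1 - d)) * ((1 + (d + e)) * B n l) := by
            apply mul_le_mul_of_nonneg_left step1; nlinarith
        _ = ((1 + d) * (1 + (d + e))) * ((1 - d) * B n l) := by ring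
        _ ≤ ((1 + d) * (1 + (d + e))) * A n l :=
            mul_le_mul_of_nonneg_left (hAlow l) (le_of_lt hNupos)
    have hub : A n (lhat n) ≤ C n * (⨅ l, A n l) := by
      rw [← div_le_iff₀' hCpos]
      apply le_ciInf
      intro l
      rw [div_le_iff₀ hCpos]
      show A n (lhat n) ≤ A n l * ((1 + d) * (1 + (d + e)) / ((1 - (d + e)) * (1 - d)))
      rw [← mul_div_assoc, le_div_iff₀ hDpos, mul_comm (A n l)]
      exact key l
    rw [div_le_iff₀ hmpos]
    exact hub
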